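/- Let (V1, V2) be a compact normal pair on a complex Hilbert space H, and let f ∈ E_1 = ker(C(V1, V2) − I) be an eigenvector of the cross-commutator [V2*, V1]. Then the closed subspace H_f, defined as the closure of the linear span of {V1^m V2^n f : m, n ≥ 0}, reduces (V1, V2), i.e. H_f is invariant under V1, V2, V1*, and V2*. -/

import Mathlib

set_option maxHeartbeats 1000000

open ContinuousLinearMap

section Defs

variable {H : Type*} [NormedAddCommGroup H] [InnerProductSpace ℂ H] [CompleteSpace H]

/-- The defect operator `C(V₁, V₂) = I - V₁V₁* - V₂V₂* + V₁V₂V₁*V₂*` of a pair of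
operators on a complex Hilbert space. -/
noncomputable def defectOp (V₁ V₂ : H →L[ℂ] H) : H →L[ℂ] H :=
  1 - V₁ ∘L adjoint V₁ - V₂ ∘L adjoint V₂ + V₁ ∘L V₂ ∘L adjoint V₁ ∘L adjoint V₂

/-- The cross-commutator `[V₂*, V₁] = V₂*V₁ - V₁V₂*`. -/
noncomputable def crossComm (V₁ V₂ : H →L[ℂ] H) : H →L[ℂ] H :=
  adjoint V₂ ∘L V₁ - V₁ ∘L adjoint V₂

/-- An isometric pair: both operators are isometries and they commute. -/
def IsIsometricPair (V₁ V₂ : H →L[ℂ] H) : Prop :=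
  (∀ x : H, ‖V₁ x‖ = ‖x‖) ∧ (∀ x : H, ‖V₂ x‖ = ‖x‖) ∧ V₁ ∘L V₂ = V₂ ∘L V₁

/-- A shift: an isometry `V` such that `(V*)^n x → 0` for every `x`. -/
def IsShift (V : H →L[ℂ] H) : Prop :=
  (∀ x : H, ‖V x‖ = ‖x‖) ∧
    ∀ x : H, Filter.Tendsto (fun n : ℕ => (adjoint V ^ n) x) Filter.atTop (nhds 0)

/-- A BCL pair: an isometric pair whose product is a shift. -/
def IsBCLPair (V₁ V₂ : H →L[ℂ] H) : Prop :=
  IsIsometricPair V₁ V₂ ∧ IsShift (V₁ ∘L V₂)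

/-- A compact normal pair: a BCL pair whose cross-commutator is compact and normal. -/
def IsCompactNormalPair (V₁ V₂ : H →L[ℂ] H) : Prop :=
  IsBCLPair V₁ V₂ ∧ IsCompactOperator ⇑(crossComm V₁ V₂) ∧
    crossComm V₁ V₂ ∘L adjoint (crossComm V₁ V₂) =
      adjoint (crossComm V₁ V₂) ∘L crossComm V₁ V₂

/-- A subspace reduces the pair `(V₁, V₂)` if it is invariant under `V₁, V₂, V₁*, V₂*`. -/
def ReducesPair (V₁ V₂ : H →L[ℂ] H) (S : Submodule ℂ H) : Prop :=
  (∀ x ∈ S, V₁ x ∈ S) ∧ (∀ x ∈ S, V₂ x ∈ S) ∧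
    (∀ x ∈ S, adjoint V₁ x ∈ S) ∧ (∀ x ∈ S, adjoint V₂ x ∈ S)

/-- A pair is irreducible if its only closed reducing subspaces are `⊥` and `⊤`. -/
def IsIrreduciblePair (V₁ V₂ : H →L[ℂ] H) : Prop :=
  ∀ S : Submodule ℂ H, IsClosed (S : Set H) → ReducesPair V₁ V₂ S → S = ⊥ ∨ S = ⊤

/-- An `n`-finite pair: a compact normal pair whose defect operator has `n`-dimensional
range. -/
def IsNFinitePair (n : ℕ) (V₁ V₂ : H →L[ℂ] H) : Prop :=
  IsCompactNormalPair V₁ V₂ ∧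
    Module.rank ℂ (LinearMap.range (defectOp V₁ V₂).toLinearMap) = n

end Defs

section AuxLemmas

open scoped InnerProductSpace

variable {H : Type*} [NormedAddCommGroup H] [InnerProductSpace ℂ H] [CompleteSpace H]

lemma aux_isom_adj_apply {V : H →L[ℂ] H} (h : ∀ x : H, ‖V x‖ = ‖x‖) (x : H) :
    adjoint V (V x) = x := by
  apply ext_inner_right ℂ
  intro y
  rw [adjoint_inner_left]
  exact LinearIsometry.inner_map_map ⟨V.toLinearMap, h⟩ x y

lemma aux_adj_contraction {V : H →L[ℂ] H} (h : ∀ x : H, ‖V x‖ = ‖x‖) (x : H) :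
    ‖adjoint V x‖ ≤ ‖x‖ := by
  have h1 : ‖adjoint V x‖ * ‖adjoint V x‖ = RCLike.re (⟪x, V (adjoint V x)⟫_ℂ) := by
    rw [← adjoint_inner_left]
    exact (inner_self_eq_norm_mul_norm (𝕜 := ℂ) _).symm
  have h2 : RCLike.re (⟪x, V (adjoint V x)⟫_ℂ) ≤ ‖x‖ * ‖adjoint V x‖ := by
    calc RCLike.re (⟪x, V (adjoint V x)⟫_ℂ) ≤ ‖(⟪x, V (adjoint V x)⟫_ℂ)‖ :=
          RCLike.re_le_norm _
      _ ≤ ‖x‖ * ‖V (adjoint V x)‖ := norm_inner_le_norm _ _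
      _ = ‖x‖ * ‖adjoint V x‖ := by rw [h]
  nlinarith [norm_nonneg x, norm_nonneg (adjoint V x)]

lemma aux_normal_norm_adj {A : H →L[ℂ] H} (hA : A ∘L adjoint A = adjoint A ∘L A) (x : H) :
    ‖adjoint A x‖ = ‖A x‖ := by
  have key : (⟪adjoint A x, adjoint A x⟫_ℂ) = ⟪A x, A x⟫_ℂ := by
    rw [adjoint_inner_left, ← comp_apply A (adjoint A), hA, comp_apply, adjoint_inner_right]
  have h1 : ‖adjoint A x‖ * ‖adjoint A x‖ = ‖A x‖ * ‖A x‖ := by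
    rw [← inner_self_eq_norm_mul_norm (𝕜 := ℂ), ← inner_self_eq_norm_mul_norm (𝕜 := ℂ), key]
  exact mul_self_inj (norm_nonneg _) (norm_nonneg _) |>.mp h1

lemma aux_normal_adj_eigen {A : H →L[ℂ] H} (hA : A ∘L adjoint A = adjoint A ∘L A)
    {μ : ℂ} {x : H} (hx : A x = μ • x) :
    adjoint A x = (starRingEnd ℂ μ) • x := by
  have hsw : A (adjoint A x) = adjoint A (A x) := by
    rw [← comp_apply A (adjoint A), hA, comp_apply]
  have e1 : (⟪adjoint A x, adjoint A x⟫_ℂ) = (starRingEnd ℂ μ) * (μ * ⟪x, x⟫_ℂ) := by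
    rw [adjoint_inner_left, hsw, adjoint_inner_right, hx, inner_smul_left, inner_smul_right]
  have e2 : (⟪adjoint A x, x⟫_ℂ) = μ * ⟪x, x⟫_ℂ := by
    rw [adjoint_inner_left, hx, inner_smul_right]
  have e3 : (⟪x, adjoint A x⟫_ℂ) = (starRingEnd ℂ μ) * ⟪x, x⟫_ℂ := by
    rw [adjoint_inner_right, hx, inner_smul_left]
  have key : (⟪adjoint A x - (starRingEnd ℂ μ) • x,
      adjoint A x - (starRingEnd ℂ μ) • x⟫_ℂ) = 0 := by
    rw [inner_sub_left, inner_sub_right, inner_sub_right, inner_smul_left, inner_smul_right,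
      inner_smul_left, inner_smul_right, e1, e2, e3]
    ring
  exact sub_eq_zero.mp (inner_self_eq_zero.mp key)

lemma aux_defect_eigen_adj_zero {V₁ V₂ : H →L[ℂ] H}
    (h1 : ∀ x : H, ‖V₁ x‖ = ‖x‖) (h2 : ∀ x : H, ‖V₂ x‖ = ‖x‖)
    {f : H} (hCf : defectOp V₁ V₂ f = f) :
    adjoint V₁ f = 0 ∧ adjoint V₂ f = 0 := by
  have hexp : V₁ (adjoint V₁ f) + V₂ (adjoint V₂ f)
      = V₁ (V₂ (adjoint V₁ (adjoint V₂ f))) := by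
    have h := hCf
    simp only [defectOp, add_apply, sub_apply, ContinuousLinearMap.one_apply, comp_apply] at h
    linear_combination (norm := abel) -h
  set a := ‖adjoint V₁ f‖ with ha
  set b := ‖adjoint V₂ f‖ with hb
  have hA : RCLike.re (⟪f, V₁ (adjoint V₁ f)⟫_ℂ) = a * a := by
    rw [← adjoint_inner_left]
    exact inner_self_eq_norm_mul_norm (𝕜 := ℂ) _
  have hB : RCLike.re (⟪f, V₂ (adjoint V₂ f)⟫_ℂ) = b * b := by
    rw [← adjoint_inner_left]
    exact inner_self_eq_norm_mul_norm (𝕜 := ℂ) _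
  have hC : (⟪f, V₁ (V₂ (adjoint V₁ (adjoint V₂ f)))⟫_ℂ)
      = ⟪adjoint V₂ (adjoint V₁ f), adjoint V₁ (adjoint V₂ f)⟫_ℂ := by
    rw [← adjoint_inner_left V₁, ← adjoint_inner_left V₂]
  have hCb : RCLike.re (⟪f, V₁ (V₂ (adjoint V₁ (adjoint V₂ f)))⟫_ℂ) ≤ a * b := by
    rw [hC]
    calc RCLike.re (⟪adjoint V₂ (adjoint V₁ f), adjoint V₁ (adjoint V₂ f)⟫_ℂ)
        ≤ ‖(⟪adjoint V₂ (adjoint V₁ f), adjoint V₁ (adjoint V₂ f)⟫_ℂ)‖ := RCLike.re_le_norm _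
      _ ≤ ‖adjoint V₂ (adjoint V₁ f)‖ * ‖adjoint V₁ (adjoint V₂ f)‖ := norm_inner_le_norm _ _
      _ ≤ a * b := by
          exact mul_le_mul (aux_adj_contraction h2 _) (aux_adj_contraction h1 _)
            (norm_nonneg _) (norm_nonneg _)
  have hsum : a * a + b * b ≤ a * b := by
    have hre : RCLike.re (⟪f, V₁ (adjoint V₁ f) + V₂ (adjoint V₂ f)⟫_ℂ)
        = RCLike.re (⟪f, V₁ (V₂ (adjoint V₁ (adjoint V₂ f)))⟫_ℂ) := by rw [hexp]
    rw [inner_add_right, map_add, hA, hB] at hre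
    linarith [hCb, hre]
  have ha0 : a = 0 := by
    nlinarith [norm_nonneg (adjoint V₁ f), norm_nonneg (adjoint V₂ f),
      sq_nonneg (a - b), sq_nonneg (a + b)]
  have hb0 : b = 0 := by
    nlinarith [norm_nonneg (adjoint V₁ f), norm_nonneg (adjoint V₂ f),
      sq_nonneg (a - b), sq_nonneg (a + b)]
  exact ⟨norm_eq_zero.mp ha0, norm_eq_zero.mp hb0⟩

lemma aux_span_clm_invariant (L : H →L[ℂ] H) {s : Set H}
    (h : ∀ y ∈ s, L y ∈ Submodule.span ℂ s) {x : H}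
    (hx : x ∈ Submodule.span ℂ s) : L x ∈ Submodule.span ℂ s := by
  induction hx using Submodule.span_induction with
  | mem y hy => exact h y hy
  | zero => simpa using Submodule.zero_mem (Submodule.span ℂ s)
  | add a b _ _ ha hb => simpa [map_add] using Submodule.add_mem _ ha hb
  | smul c a _ ha => simpa [map_smul] using Submodule.smul_mem _ c ha

lemma aux_closure_clm_invariant (L : H →L[ℂ] H) {s : Set H}
    (h : ∀ y ∈ s, L y ∈ Submodule.span ℂ s) {x : H}
    (hx : x ∈ (Submodule.span ℂ s).topologicalClosure) :
    L x ∈ (Submodule.span ℂ s).topologicalClosure := by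
  have hx' : x ∈ closure ((Submodule.span ℂ s : Submodule ℂ H) : Set H) := hx
  have hmt : Set.MapsTo L ((Submodule.span ℂ s : Submodule ℂ H) : Set H)
      ((Submodule.span ℂ s : Submodule ℂ H) : Set H) :=
    fun y hy => aux_span_clm_invariant L h hy
  exact map_mem_closure L.continuous hx' hmt

end AuxLemmas

/-- For a compact normal pair, the closed subspace generated by an
eigenvector `f ∈ E₁` of the cross-commutator under `V₁, V₂` reduces the pair. -/
theorem stmt_16 {H : Type*} [NormedAddCommGroup H] [InnerProductSpace ℂ H] [CompleteSpace H]
    (V₁ V₂ : H →L[ℂ] H)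
    (hcnp : IsCompactNormalPair V₁ V₂)
    (f : H) (hf : f ∈ LinearMap.ker (defectOp V₁ V₂ - 1 : H →L[ℂ] H).toLinearMap) (hf0 : f ≠ 0)
    (heig : ∃ μ : ℂ, crossComm V₁ V₂ f = μ • f) :
    ReducesPair V₁ V₂
      (Submodule.span ℂ
        (Set.range fun p : ℕ × ℕ => (V₁ ^ p.1) ((V₂ ^ p.2) f))).topologicalClosure := by
  obtain ⟨⟨⟨h1, h2, hc⟩, _⟩, _, hnorm⟩ := hcnp
  obtain ⟨μ, hμ⟩ := heig
  -- pointwise commutation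
  have hcp : ∀ y : H, V₁ (V₂ y) = V₂ (V₁ y) := fun y => by
    rw [← comp_apply V₁ V₂, hc, comp_apply]
  -- f is killed by both adjoints
  have hCf : defectOp V₁ V₂ f = f := by
    have h : (defectOp V₁ V₂ - 1 : H →L[ℂ] H) f = 0 := LinearMap.mem_ker.mp hf
    rw [ContinuousLinearMap.sub_apply, ContinuousLinearMap.one_apply] at h
    exact sub_eq_zero.mp h
  obtain ⟨hV1f, hV2f⟩ := aux_defect_eigen_adj_zero h1 h2 hCf
  -- pointwise formulas for the cross-commutator and its adjoint
  have hTapp : ∀ x : H, crossComm V₁ V₂ x = adjoint V₂ (V₁ x) - V₁ (adjoint V₂ x) := by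
    intro x
    simp [crossComm, ContinuousLinearMap.sub_apply, comp_apply]
  have hTadj : adjoint (crossComm V₁ V₂) = adjoint V₁ ∘L V₂ - V₂ ∘L adjoint V₁ := by
    simp [crossComm, map_sub, adjoint_comp, adjoint_adjoint]
  have hT'app : ∀ x : H,
      adjoint (crossComm V₁ V₂) x = adjoint V₁ (V₂ x) - V₂ (adjoint V₁ x) := by
    intro x
    rw [hTadj]
    simp [ContinuousLinearMap.sub_apply, comp_apply]
  -- eigenvalue relations
  have e1 : adjoint V₂ (V₁ f) = μ • f := by
    have h := hμ
    rw [hTapp, hV2f] at h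
    simpa using h
  have estar : adjoint (crossComm V₁ V₂) f = (starRingEnd ℂ μ) • f :=
    aux_normal_adj_eigen hnorm hμ
  have e2 : adjoint V₁ (V₂ f) = (starRingEnd ℂ μ) • f := by
    have h := estar
    rw [hT'app, hV1f] at h
    simpa using h
  -- the cross-commutator and its adjoint vanish on the ranges of V₁ and V₂
  have zTV₂ : ∀ x : H, crossComm V₁ V₂ (V₂ x) = 0 := by
    intro x
    rw [hTapp, hcp, aux_isom_adj_apply h2, aux_isom_adj_apply h2, sub_self]
  have zT'V₁ : ∀ x : H, adjoint (crossComm V₁ V₂) (V₁ x) = 0 := by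
    intro x
    rw [hT'app, ← hcp, aux_isom_adj_apply h1, aux_isom_adj_apply h1, sub_self]
  have zTV₁ : ∀ x : H, crossComm V₁ V₂ (V₁ x) = 0 := by
    intro x
    have hn := aux_normal_norm_adj hnorm (V₁ x)
    rw [zT'V₁ x] at hn
    exact norm_eq_zero.mp (by simpa using hn.symm)
  have zT'V₂ : ∀ x : H, adjoint (crossComm V₁ V₂) (V₂ x) = 0 := by
    intro x
    have hn := aux_normal_norm_adj hnorm (V₂ x)
    rw [zTV₂ x] at hn
    exact norm_eq_zero.mp (by simpa using hn)
  -- commutation of adjoints through the other operator on the relevant ranges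
  have c1 : ∀ x : H, adjoint V₂ (V₁ (V₁ x)) = V₁ (adjoint V₂ (V₁ x)) := by
    intro x
    have h := zTV₁ x
    rw [hTapp] at h
    exact sub_eq_zero.mp h
  have c2 : ∀ x : H, adjoint V₁ (V₂ (V₂ x)) = V₂ (adjoint V₁ (V₂ x)) := by
    intro x
    have h := zT'V₂ x
    rw [hT'app] at h
    exact sub_eq_zero.mp h
  -- power manipulation lemmas
  have hpow1 : ∀ (m : ℕ) (x : H), (V₁ ^ (m + 1)) x = V₁ ((V₁ ^ m) x) := by
    intro m x
    rw [pow_succ', ContinuousLinearMap.mul_apply]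
  have hpow2 : ∀ (n : ℕ) (x : H), (V₂ ^ (n + 1)) x = V₂ ((V₂ ^ n) x) := by
    intro n x
    rw [pow_succ', ContinuousLinearMap.mul_apply]
  have hpowc : ∀ (m : ℕ) (x : H), V₂ ((V₁ ^ m) x) = (V₁ ^ m) (V₂ x) := by
    intro m x
    induction m with
    | zero => simp
    | succ k ih =>
      rw [hpow1, ← hcp, ih, ← hpow1]
  -- action of the adjoints on the generators
  have F2 : ∀ n : ℕ, adjoint V₁ ((V₂ ^ (n + 1)) f) = (starRingEnd ℂ μ) • ((V₂ ^ n) f) := by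
    intro n
    induction n with
    | zero => simpa [hpow2 0 f] using e2
    | succ k ih =>
      rw [hpow2 (k + 1) f, hpow2 k f, c2, ← hpow2 k f, ih, map_smul, ← hpow2 k f]
  have G2 : ∀ m : ℕ, adjoint V₂ ((V₁ ^ (m + 1)) f) = μ • ((V₁ ^ m) f) := by
    intro m
    induction m with
    | zero => simpa [hpow1 0 f] using e1
    | succ k ih =>
      rw [hpow1 (k + 1) f, hpow1 k f, c1, ← hpow1 k f, ih, map_smul, ← hpow1 k f]
  set s : Set H := Set.range fun p : ℕ × ℕ => (V₁ ^ p.1) ((V₂ ^ p.2) f) with hs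
  have hgen : ∀ (m n : ℕ), (V₁ ^ m) ((V₂ ^ n) f) ∈ Submodule.span ℂ s :=
    fun m n => Submodule.subset_span ⟨(m, n), rfl⟩
  refine ⟨?_, ?_, ?_, ?_⟩ <;> intro x hx
  · refine aux_closure_clm_invariant V₁ ?_ hx
    rintro y ⟨⟨m, n⟩, rfl⟩
    show V₁ ((V₁ ^ m) ((V₂ ^ n) f)) ∈ Submodule.span ℂ s
    rw [← hpow1 m]
    exact hgen (m + 1) n
  · refine aux_closure_clm_invariant V₂ ?_ hx
    rintro y ⟨⟨m, n⟩, rfl⟩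
    show V₂ ((V₁ ^ m) ((V₂ ^ n) f)) ∈ Submodule.span ℂ s
    rw [hpowc, ← hpow2 n]
    exact hgen m (n + 1)
  · refine aux_closure_clm_invariant (adjoint V₁) ?_ hx
    rintro y ⟨⟨m, n⟩, rfl⟩
    show adjoint V₁ ((V₁ ^ m) ((V₂ ^ n) f)) ∈ Submodule.span ℂ s
    cases m with
    | zero =>
      cases n with
      | zero =>
        simpa [hV1f] using Submodule.zero_mem (Submodule.span ℂ s)
      | succ k =>
        rw [pow_zero, ContinuousLinearMap.one_apply, F2 k]
        exact Submodule.smul_mem _ _ (hgen 0 k)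
    | succ k =>
      rw [hpow1 k, aux_isom_adj_apply h1]
      exact hgen k n
  · refine aux_closure_clm_invariant (adjoint V₂) ?_ hx
    rintro y ⟨⟨m, n⟩, rfl⟩
    show adjoint V₂ ((V₁ ^ m) ((V₂ ^ n) f)) ∈ Submodule.span ℂ s
    cases n with
    | zero =>
      cases m with
      | zero =>
        simpa [hV2f] using Submodule.zero_mem (Submodule.span ℂ s)
      | succ k =>
        rw [pow_zero, ContinuousLinearMap.one_apply, G2 k]
        exact Submodule.smul_mem _ _ (hgen k 0)
    | succ k =>
      rw [hpow2 k, ← hpowc, aux_isom_adj_apply h2]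
      exact hgen m k
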